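/- Let X be a separable metrizable space. Then X is completely metrizable (i.e., X is a Polish space) if and only if there exists a sequence of continuous functions f_n : X → [0,1] with f_0 ≥ f_1 ≥ f_2 ≥ ⋯ pointwise, converging pointwise to 0 on X, such that for every set A ⊆ X on which the sequence (f_n) converges uniformly, the closure of A in X is compact. -/

import Mathlib

open Cardinal Filter

noncomputable def auxF {X : Type} [PseudoMetricSpace X] (u : ℕ → X) : ℕ → X → ℝ
  | 0 => fun x => min 1 (dist x (u 0))
  | (n + 1) => fun x => min (auxF u n x) (dist x (u (n + 1)))

lemma auxF_cont {X : Type} [PseudoMetricSpace X] (u : ℕ → X) (n : ℕ) :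
    Continuous (auxF u n) := by
  induction n with
  | zero => exact continuous_const.min (continuous_id.dist continuous_const)
  | succ n ih => exact ih.min (continuous_id.dist continuous_const)

lemma auxF_nonneg {X : Type} [PseudoMetricSpace X] (u : ℕ → X) (n : ℕ) (x : X) :
    0 ≤ auxF u n x := by
  induction n with
  | zero => exact le_min zero_le_one dist_nonneg
  | succ n ih => exact le_min ih dist_nonneg

lemma auxF_le_one {X : Type} [PseudoMetricSpace X] (u : ℕ → X) (n : ℕ) (x : X) :
    auxF u n x ≤ 1 := by
  induction n with
  | zero => exact min_le_left _ _
  | succ n ih => exact (min_le_left _ _).trans ih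

lemma auxF_succ_le {X : Type} [PseudoMetricSpace X] (u : ℕ → X) (n : ℕ) (x : X) :
    auxF u (n + 1) x ≤ auxF u n x := min_le_left _ _

lemma auxF_anti {X : Type} [PseudoMetricSpace X] (u : ℕ → X) (x : X) :
    Antitone (fun n => auxF u n x) :=
  antitone_nat_of_succ_le fun n => auxF_succ_le u n x

lemma auxF_le_dist {X : Type} [PseudoMetricSpace X] (u : ℕ → X) {i n : ℕ} (h : i ≤ n) (x : X) :
    auxF u n x ≤ dist x (u i) := by
  induction n with
  | zero =>
    obtain rfl : i = 0 := Nat.le_zero.mp h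
    exact min_le_right _ _
  | succ n ih =>
    rcases Nat.lt_succ_iff_lt_or_eq.mp (Nat.lt_succ_of_le h) with h' | rfl
    · exact (min_le_left _ _).trans (ih (Nat.lt_succ_iff.mp h'))
    · exact min_le_right _ _

lemma auxF_lt {X : Type} [PseudoMetricSpace X] (u : ℕ → X) {c : ℝ} (hc : c ≤ 1) {n : ℕ} {x : X}
    (h : auxF u n x < c) : ∃ i ≤ n, dist x (u i) < c := by
  induction n with
  | zero =>
    rcases min_lt_iff.mp h with h' | h'
    · linarith
    · exact ⟨0, le_refl _, h'⟩
  | succ n ih =>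
    rcases min_lt_iff.mp h with h' | h'
    · obtain ⟨i, hi, hd⟩ := ih h'
      exact ⟨i, hi.trans (Nat.le_succ n), hd⟩
    · exact ⟨n + 1, le_refl _, h'⟩

lemma reverse_dir {X : Type} [TopologicalSpace X] [TopologicalSpace.MetrizableSpace X]
    [TopologicalSpace.SeparableSpace X]
    (f : ℕ → X → ℝ) (hcont : ∀ n, Continuous (f n)) (hmem : ∀ n x, f n x ∈ Set.Icc (0:ℝ) 1)
    (hdec : ∀ n x, f (n + 1) x ≤ f n x) (htend : ∀ x, Tendsto (fun n => f n x) atTop (nhds 0))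
    (hcomp : ∀ A : Set X, TendstoUniformlyOn f (fun _ => 0) atTop A → IsCompact (closure A)) :
    PolishSpace X := by
  letI m : MetricSpace X := TopologicalSpace.metrizableSpaceMetric X
  haveI : SecondCountableTopology X := UniformSpace.secondCountable_of_separable X
  have hanti : ∀ x, Antitone fun n => f n x := fun x => antitone_nat_of_succ_le fun n => hdec n x
  set S : X → X → ℝ := fun x y => ⨆ n, |f n x - f n y| with hSdef
  have habs : ∀ (n : ℕ) (x y : X), |f n x - f n y| ≤ 1 := by
    intro n x y
    have h1 := hmem n x; have h2 := hmem n y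
    rw [abs_le]
    constructor <;> [linarith [h1.1, h2.2]; linarith [h1.2, h2.1]]
  have hbdd : ∀ x y : X, BddAbove (Set.range fun n => |f n x - f n y|) := by
    intro x y
    refine ⟨1, ?_⟩
    rintro - ⟨n, rfl⟩
    exact habs n x y
  have hSle : ∀ (x y : X) (c : ℝ), (∀ n, |f n x - f n y| ≤ c) → S x y ≤ c :=
    fun x y c h => ciSup_le h
  have hleS : ∀ (n : ℕ) (x y : X), |f n x - f n y| ≤ S x y := fun n x y => le_ciSup (hbdd x y) n
  have hS0 : ∀ x y : X, 0 ≤ S x y := fun x y => (abs_nonneg _).trans (hleS 0 x y)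
  set D : X → X → ℝ := fun x y => dist x y + S x y with hDdef
  -- key neighborhood estimate
  have key : ∀ (x : X) (ε : ℝ), 0 < ε → ∀ᶠ y in nhds x, D x y < ε := by
    intro x ε hε
    obtain ⟨N, hN⟩ : ∃ N, f N x < ε / 4 :=
      ((htend x).eventually_lt_const (by linarith)).exists
    have h1 : ∀ᶠ y in nhds x, dist x y < ε / 4 := by
      have hc : Tendsto (fun y => dist x y) (nhds x) (nhds (dist x x)) :=
        (continuous_const.dist continuous_id).tendsto x
      rw [dist_self] at hc
      exact hc.eventually_lt_const (by linarith)
    have h2 : ∀ᶠ y in nhds x, ∀ n ∈ Finset.range (N + 1), |f n x - f n y| < ε / 4 := by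
      rw [eventually_all_finset]
      intro n _
      have hc : Tendsto (fun y => |f n x - f n y|) (nhds x) (nhds |f n x - f n x|) :=
        ((continuous_const.sub (hcont n)).abs).tendsto x
      rw [sub_self, abs_zero] at hc
      exact hc.eventually_lt_const (by linarith)
    filter_upwards [h1, h2] with y hy1 hy2
    have hs : S x y ≤ ε / 2 := by
      apply hSle
      intro n
      rcases le_or_gt n N with hn | hn
      · have hlt := hy2 n (Finset.mem_range.2 (Nat.lt_succ_of_le hn))
        linarith
      · have hfx : f n x ≤ f N x := hanti x hn.le
        have hfy : f n y ≤ f N y := hanti y hn.le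
        have hNxy := abs_sub_lt_iff.1 (hy2 N (Finset.mem_range.2 (Nat.lt_succ_self N)))
        have h0x := (hmem n x).1
        have h0y := (hmem n y).1
        rw [abs_le]
        constructor <;> [linarith [hNxy.2]; linarith [hNxy.2]]
    have : D x y = dist x y + S x y := rfl
    linarith
  -- the new metric
  have Dself : ∀ x : X, D x x = 0 := by
    intro x
    simp [hDdef, hSdef]
  have Dcomm : ∀ x y : X, D x y = D y x := by
    intro x y
    simp [hDdef, hSdef, dist_comm, abs_sub_comm]
  have Dtri : ∀ x y z : X, D x z ≤ D x y + D y z := by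
    intro x y z
    have hst : S x z ≤ S x y + S y z := by
      apply hSle
      intro n
      calc |f n x - f n z| ≤ |f n x - f n y| + |f n y - f n z| := abs_sub_le _ _ _
        _ ≤ S x y + S y z := add_le_add (hleS n x y) (hleS n y z)
    have hdt : dist x z ≤ dist x y + dist y z := dist_triangle x y z
    show dist x z + S x z ≤ (dist x y + S x y) + (dist y z + S y z)
    linarith
  have Deq : ∀ x y : X, D x y = 0 → x = y := by
    intro x y h
    have h1 : dist x y + S x y = 0 := h
    have h2 : (0:ℝ) ≤ dist x y := dist_nonneg
    have h3 := hS0 x y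
    have : dist x y = 0 := by linarith
    exact eq_of_dist_eq_zero this
  have hSD : ∀ x y : X, S x y ≤ D x y := by
    intro x y
    have h : D x y = dist x y + S x y := rfl
    have := dist_nonneg (x := x) (y := y)
    linarith
  have hopen : ∀ s : Set X, IsOpen s ↔ ∀ x ∈ s, ∃ ε > 0, ∀ y, D x y < ε → y ∈ s := by
    intro s
    constructor
    · intro hs x hx
      obtain ⟨ε, hε, hball⟩ := Metric.isOpen_iff.1 hs x hx
      refine ⟨ε, hε, fun y hy => hball ?_⟩
      rw [Metric.mem_ball, dist_comm]
      have h1 : dist x y + S x y < ε := hy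
      have := hS0 x y
      linarith
    · intro h
      rw [isOpen_iff_mem_nhds]
      intro x hx
      obtain ⟨ε, hε, hb⟩ := h x hx
      exact (key x ε hε).mono fun y hy => hb y hy
  let M : MetricSpace X := MetricSpace.ofDistTopology D Dself Dcomm Dtri hopen Deq
  refine { toSecondCountableTopology := inferInstance, complete := ⟨M, rfl, ?_⟩ }
  refine @Metric.complete_of_cauchySeq_tendsto X M.toPseudoMetricSpace ?_
  intro u hu
  have hc := (@Metric.cauchySeq_iff X ℕ M.toPseudoMetricSpace _ _ u).1 hu
  have hA : TendstoUniformlyOn f (fun _ => 0) atTop (Set.range u) := by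
    rw [Metric.tendstoUniformlyOn_iff]
    intro ε hε
    obtain ⟨K, hK⟩ := hc (ε / 2) (by linarith)
    have hKD : ∀ j, K ≤ j → D (u K) (u j) < ε / 2 := fun j hj => hK K le_rfl j hj
    have hptw : ∀ᶠ n in atTop, ∀ j ∈ Finset.range (K + 1), f n (u j) < ε / 2 := by
      rw [eventually_all_finset]
      intro j _
      exact (htend (u j)).eventually_lt_const (by linarith)
    filter_upwards [hptw] with n hn
    rintro x ⟨j, rfl⟩
    have hval : f n (u j) < ε := by
      rcases le_or_gt j K with hj | hj
      · have := hn j (Finset.mem_range.2 (Nat.lt_succ_of_le hj))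
        linarith
      · have h1 : D (u K) (u j) < ε / 2 := hKD j hj.le
        have h2 : |f n (u K) - f n (u j)| ≤ S (u K) (u j) := hleS n (u K) (u j)
        have h3 : S (u K) (u j) < ε / 2 := lt_of_le_of_lt (hSD _ _) h1
        have h5 := hn K (Finset.mem_range.2 (Nat.lt_succ_self K))
        have h6 := abs_sub_le_iff.1 h2
        linarith [h6.2]
    have : dist ((fun _ => (0:ℝ)) (u j)) (f n (u j)) = f n (u j) := by
      simp [Real.dist_eq, abs_of_nonneg (hmem n (u j)).1]
    rw [this]
    exact hval
  have hcl : IsCompact (closure (Set.range u)) := hcomp _ hA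
  obtain ⟨x, -, φ, hφ, hxφ⟩ :=
    hcl.tendsto_subseq fun n => subset_closure (Set.mem_range_self n)
  refine ⟨x, ?_⟩
  have hsub : Tendsto (u ∘ φ) atTop (@nhds X M.toUniformSpace.toTopologicalSpace x) := by
    rw [@Metric.tendsto_atTop X ℕ M.toPseudoMetricSpace _ _ (u ∘ φ) x]
    intro ε hε
    obtain ⟨N, hN⟩ := eventually_atTop.1 (hxφ.eventually (key x ε hε))
    refine ⟨N, fun n hn => ?_⟩
    have h2 := hN n hn
    rw [Dcomm x ((u ∘ φ) n)] at h2
    exact h2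
  exact tendsto_nhds_of_cauchySeq_of_subseq hu hφ.tendsto_atTop hsub


/-- A separable metrizable space `X` is completely metrizable (Polish) iff there is a
pointwise decreasing sequence of continuous functions `fₙ : X → [0,1]` converging
pointwise to `0` such that every set on which the convergence is uniform has compact
closure. -/
theorem stmt_15 (X : Type) [TopologicalSpace X] [TopologicalSpace.MetrizableSpace X]
    [TopologicalSpace.SeparableSpace X] :
    PolishSpace X ↔
      ∃ f : ℕ → X → ℝ,
        (∀ n, Continuous (f n)) ∧
        (∀ n x, f n x ∈ Set.Icc (0 : ℝ) 1) ∧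
        (∀ n x, f (n + 1) x ≤ f n x) ∧
        (∀ x, Tendsto (fun n => f n x) atTop (nhds 0)) ∧
        ∀ A : Set X, TendstoUniformlyOn f (fun _ => 0) atTop A →
          IsCompact (closure A) := by
  constructor
  · intro hp
    rcases isEmpty_or_nonempty X with hX | hX
    · refine ⟨fun _ _ => 0, fun n => continuous_const, fun n x => ⟨le_refl 0, zero_le_one⟩,
        fun n x => le_rfl, fun x => tendsto_const_nhds, fun A _ => ?_⟩
      rw [Set.eq_empty_of_isEmpty (closure A)]
      exact isCompact_empty
    · letI := TopologicalSpace.upgradeIsCompletelyMetrizable X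
      set u := TopologicalSpace.denseSeq X with hu
      refine ⟨auxF u, fun n => auxF_cont u n,
        fun n x => ⟨auxF_nonneg u n x, auxF_le_one u n x⟩,
        fun n x => auxF_succ_le u n x, ?_, ?_⟩
      · intro x
        rw [Metric.tendsto_atTop]
        intro ε hε
        obtain ⟨i, hi⟩ := Metric.denseRange_iff.1 (TopologicalSpace.denseRange_denseSeq X) x ε hε
        refine ⟨i, fun n hn => ?_⟩
        rw [Real.dist_eq, sub_zero, abs_of_nonneg (auxF_nonneg u n x)]
        calc auxF u n x ≤ auxF u i x := auxF_anti u x hn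
          _ ≤ dist x (u i) := auxF_le_dist u le_rfl x
          _ < ε := hi
      · intro A hA
        refine TotallyBounded.isCompact_of_isClosed ?_ isClosed_closure
        apply TotallyBounded.closure
        rw [Metric.totallyBounded_iff]
        intro ε hε
        have hc : (0:ℝ) < min ε 1 := lt_min hε one_pos
        obtain ⟨n, hn⟩ := (Metric.tendstoUniformlyOn_iff.1 hA (min ε 1) hc).exists
        refine ⟨u '' Set.Iic n, (Set.finite_Iic n).image u, ?_⟩
        intro x hx
        have h1 := hn x hx
        have h2 : auxF u n x < min ε 1 := by
          rwa [Real.dist_eq, zero_sub, abs_neg, abs_of_nonneg (auxF_nonneg u n x)] at h1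
        obtain ⟨i, hi, hdi⟩ := auxF_lt u (min_le_right ε 1) h2
        exact Set.mem_biUnion ⟨i, hi, rfl⟩
          (Metric.mem_ball.2 (lt_of_lt_of_le hdi (min_le_left ε 1)))
  · rintro ⟨f, hcont, hmem, hdec, htend, hcomp⟩
    exact reverse_dir f hcont hmem hdec htend hcomp
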